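/- Let W be a pointy potential on ℝ^d with constants λ ∈ ℝ and w_∞ ≥ 0, let ρ^{ini} be a probability measure on ℝ^d with finite second moment, and assume the strict 1/2-CFL condition w_∞ Σ_{i=1}^d Δt/Δx_i < 1/2. Let ρ_J^0 := ρ^{ini}(C_J) and let (ρ_J^n) be produced by the upwind scheme. Then there exists a constant C ≥ 0, depending only on d, w_∞ and Σ_{i=1}^d Δx_i, such that for all n ∈ ℕ, Σ_{J∈ℤ^d} |x_J|² ρ_J^n ≤ e^{C n Δt} (Σ_{J∈ℤ^d} |x_J|² ρ_J^0 + C). -/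

import Mathlib

open MeasureTheory Real Set
open scoped RealInnerProductSpace ENNReal

noncomputable section

/-- `ℝ^d` with the Euclidean structure. -/
abbrev Euc (d : ℕ) := EuclideanSpace ℝ (Fin d)

open Classical in
/-- `∇̂W`: the gradient of `W` away from `0`, and `0` at `0`. -/
def hatGrad {d : ℕ} (W : Euc d → ℝ) (x : Euc d) : Euc d :=
  if x = 0 then 0 else gradient W x

/-- Positive part `r⁺ = max(r,0)`. -/
def pos (r : ℝ) : ℝ := max r 0

/-- Negative part `r⁻ = max(-r,0)`. -/
def neg (r : ℝ) : ℝ := max (-r) 0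

/-- The node `x_J = (J_1 Δx_1, …, J_d Δx_d)`. -/
def node {d : ℕ} (Δx : Fin d → ℝ) (J : Fin d → ℤ) : Euc d :=
  (EuclideanSpace.equiv (Fin d) ℝ).symm (fun i => (J i : ℝ) * Δx i)

/-- The cell `C_J = Π_i [(J_i - 1/2)Δx_i, (J_i + 1/2)Δx_i)`. -/
def cell {d : ℕ} (Δx : Fin d → ℝ) (J : Fin d → ℤ) : Set (Euc d) :=
  {y | ∀ i, ((J i : ℝ) - 1/2) * Δx i ≤ y i ∧ y i < ((J i : ℝ) + 1/2) * Δx i}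

/-- The discrete velocities `(a_i)_J = -Σ_K ρ_K (∇̂W)_i (x_J - x_K)`. -/
def discVel {d : ℕ} (W : Euc d → ℝ) (Δx : Fin d → ℝ) (ρ : (Fin d → ℤ) → ℝ)
    (J : Fin d → ℤ) (i : Fin d) : ℝ :=
  -∑' K : Fin d → ℤ, ρ K * hatGrad W (node Δx J - node Δx K) i

/-- One step of the upwind scheme. -/
def upwindStep {d : ℕ} (Δx : Fin d → ℝ) (Δt : ℝ) (a : (Fin d → ℤ) → Fin d → ℝ)
    (ρ : (Fin d → ℤ) → ℝ) (J : Fin d → ℤ) : ℝ :=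
  ρ J - ∑ i : Fin d, (Δt / Δx i) *
    (pos (a J i) * ρ J - neg (a (J + Pi.single i 1) i) * ρ (J + Pi.single i 1)
      - pos (a (J - Pi.single i 1) i) * ρ (J - Pi.single i 1) + neg (a J i) * ρ J)

lemma coord_le_norm {d : ℕ} (v : Euc d) (i : Fin d) : |v i| ≤ ‖v‖ := by
  rw [EuclideanSpace.norm_eq, ← Real.sqrt_sq_eq_abs]
  apply Real.sqrt_le_sqrt
  have := Finset.single_le_sum (f := fun j => ‖v j‖ ^ 2)
    (fun j _ => by positivity) (Finset.mem_univ i)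
  simpa using this

lemma node_apply {d : ℕ} (Δx : Fin d → ℝ) (J : Fin d → ℤ) (i : Fin d) :
    node Δx J i = (J i : ℝ) * Δx i := rfl

lemma node_shift {d : ℕ} (Δx : Fin d → ℝ) (J : Fin d → ℤ) (i : Fin d) :
    node Δx (J + Pi.single i 1) = node Δx J + EuclideanSpace.single i (Δx i) := by
  apply PiLp.ext
  intro j
  have h1 : (node Δx J + EuclideanSpace.single i (Δx i)) j
      = node Δx J j + EuclideanSpace.single i (Δx i) j := rfl
  rw [h1, node_apply, node_apply, EuclideanSpace.single_apply]
  have h2 : (J + Pi.single i 1 : Fin d → ℤ) j = J j + (Pi.single i 1 : Fin d → ℤ) j := rfl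
  rw [h2, Pi.single_apply]
  push_cast
  by_cases h : j = i <;> simp [h] <;> ring

lemma node_shift_sub {d : ℕ} (Δx : Fin d → ℝ) (J : Fin d → ℤ) (i : Fin d) :
    node Δx (J - Pi.single i 1) = node Δx J - EuclideanSpace.single i (Δx i) := by
  have := node_shift Δx (J - Pi.single i 1) i
  rw [sub_add_cancel] at this
  rw [this]; abel

lemma norm_node_shift {d : ℕ} (Δx : Fin d → ℝ) (J : Fin d → ℤ) (i : Fin d) :
    ‖node Δx (J + Pi.single i 1) - node Δx J‖ = |Δx i| := by
  rw [node_shift]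
  simp [EuclideanSpace.norm_single]

lemma norm_node_shift' {d : ℕ} (Δx : Fin d → ℝ) (J : Fin d → ℤ) (i : Fin d) :
    ‖node Δx (J - Pi.single i 1) - node Δx J‖ = |Δx i| := by
  rw [node_shift_sub]
  simp [EuclideanSpace.norm_single]

/-- key: difference of squared norms of neighboring nodes -/
lemma sq_norm_diff {d : ℕ} {c : ℝ} (x y : Euc d) (h : ‖x - y‖ = c) :
    |‖x‖ ^ 2 - ‖y‖ ^ 2| ≤ c * (2 * ‖x‖ + c) := by
  have h1 : |‖x‖ - ‖y‖| ≤ c := h ▸ abs_norm_sub_norm_le x y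
  have hx : 0 ≤ ‖x‖ := norm_nonneg x
  have hy : 0 ≤ ‖y‖ := norm_nonneg y
  rw [abs_le] at h1 ⊢
  constructor <;> nlinarith [h1.1, h1.2]

def cellIdx {d : ℕ} (Δx : Fin d → ℝ) (y : Euc d) : Fin d → ℤ :=
  fun i => ⌊y i / Δx i + 1/2⌋

lemma cellIdx_eq_iff {Δ : ℝ} (hΔ : 0 < Δ) (t : ℝ) (z : ℤ) :
    ⌊t / Δ + 1/2⌋ = z ↔ (((z : ℝ) - 1/2) * Δ ≤ t ∧ t < ((z : ℝ) + 1/2) * Δ) := by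
  rw [Int.floor_eq_iff]
  have ht : t = t / Δ * Δ := (div_mul_cancel₀ t (ne_of_gt hΔ)).symm
  constructor
  · rintro ⟨h1, h2⟩
    constructor
    · have := mul_le_mul_of_nonneg_right (show (z : ℝ) - 1/2 ≤ t / Δ by linarith) hΔ.le
      linarith [this, ht.symm.le, ht.le]
    · have := mul_lt_mul_of_pos_right (show t / Δ < (z : ℝ) + 1/2 by linarith) hΔ
      nlinarith [this]
  · rintro ⟨h1, h2⟩
    constructor
    · have := (div_le_div_iff_of_pos_right hΔ).mpr h1
      rw [mul_div_cancel_right₀ _ (ne_of_gt hΔ)] at this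
      linarith
    · have := (div_lt_div_iff_of_pos_right hΔ).mpr h2
      rw [mul_div_cancel_right₀ _ (ne_of_gt hΔ)] at this
      linarith

lemma mem_cell_iff {d : ℕ} {Δx : Fin d → ℝ} (hΔx : ∀ i, 0 < Δx i) (y : Euc d)
    (J : Fin d → ℤ) : y ∈ cell Δx J ↔ cellIdx Δx y = J := by
  rw [funext_iff]
  exact ⟨fun h i => (cellIdx_eq_iff (hΔx i) (y i) (J i)).mpr (h i),
    fun h i => (cellIdx_eq_iff (hΔx i) (y i) (J i)).mp (h i)⟩

lemma cells_disjoint {d : ℕ} {Δx : Fin d → ℝ} (hΔx : ∀ i, 0 < Δx i) :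
    Pairwise (Function.onFun Disjoint (cell Δx)) := by
  intro J K hJK
  rw [Function.onFun, Set.disjoint_left]
  intro y hyJ hyK
  rw [mem_cell_iff hΔx] at hyJ hyK
  exact hJK (hyJ ▸ hyK)

lemma cells_cover {d : ℕ} {Δx : Fin d → ℝ} (hΔx : ∀ i, 0 < Δx i) :
    (⋃ J, cell Δx J) = Set.univ := by
  ext y
  simp only [Set.mem_iUnion, Set.mem_univ, iff_true]
  exact ⟨cellIdx Δx y, (mem_cell_iff hΔx y _).mpr rfl⟩

lemma cells_measurable {d : ℕ} (Δx : Fin d → ℝ) (J : Fin d → ℤ) :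
    MeasurableSet (cell Δx J) := by
  have : cell Δx J = ⋂ i, (fun y : Euc d => y i) ⁻¹'
      (Set.Ico (((J i : ℝ) - 1/2) * Δx i) (((J i : ℝ) + 1/2) * Δx i)) := by
    ext y; simp [cell, Set.mem_iInter, Set.mem_Ico]
  rw [this]
  refine MeasurableSet.iInter fun i => ?_
  have hm : Measurable fun y : Euc d => y i :=
    (EuclideanSpace.proj (𝕜 := ℝ) i).continuous.measurable
  exact hm measurableSet_Ico

section Init
variable {d : ℕ} {Δx : Fin d → ℝ} (hΔx : ∀ i, 0 < Δx i)
  (μ : Measure (Euc d)) [IsProbabilityMeasure μ]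
include hΔx

lemma init_mass_summable : Summable (fun J : Fin d → ℤ => (μ (cell Δx J)).toReal) := by
  refine ENNReal.summable_toReal ?_
  rw [← measure_iUnion (cells_disjoint hΔx) (cells_measurable Δx), cells_cover hΔx,
    measure_univ]
  exact ENNReal.one_ne_top

lemma init_mass : ∑' J : Fin d → ℤ, (μ (cell Δx J)).toReal = 1 := by
  rw [← ENNReal.tsum_toReal_eq (fun J => measure_ne_top μ _),
    ← measure_iUnion (cells_disjoint hΔx) (cells_measurable Δx), cells_cover hΔx,
    measure_univ, ENNReal.toReal_one]

lemma dist_node_cell {J : Fin d → ℤ} {y : Euc d} (hy : y ∈ cell Δx J) :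
    ‖node Δx J - y‖ ^ 2 ≤ ∑ i, (Δx i) ^ 2 := by
  rw [EuclideanSpace.norm_eq, Real.sq_sqrt (by positivity)]
  refine Finset.sum_le_sum fun i _ => ?_
  have h1 := (hy i).1
  have h2 := (hy i).2
  have hd := hΔx i
  have hcoord : (node Δx J - y) i = (J i : ℝ) * Δx i - y i := rfl
  rw [Real.norm_eq_abs, hcoord, sq_abs]
  nlinarith

lemma init_mom_summable (hmom2 : Integrable (fun x : Euc d => ‖x‖ ^ 2) μ) :
    Summable (fun J : Fin d → ℤ => ‖node Δx J‖ ^ 2 * (μ (cell Δx J)).toReal) := by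
  set R2 : ℝ := ∑ i, (Δx i) ^ 2 with hR2
  set g : Euc d → ℝ := fun y => 2 * ‖y‖ ^ 2 + 2 * R2 with hg
  have hgint : Integrable g μ := (hmom2.const_mul 2).add (integrable_const _)
  have hbound : ∀ J : Fin d → ℤ, ‖node Δx J‖ ^ 2 * (μ (cell Δx J)).toReal ≤
      ∫ y in cell Δx J, g y ∂μ := by
    intro J
    have hle : ∀ y ∈ cell Δx J, ‖node Δx J‖ ^ 2 ≤ g y := by
      intro y hy
      have h1 := dist_node_cell hΔx hy
      have h2 : ‖node Δx J‖ ≤ ‖y‖ + ‖node Δx J - y‖ := by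
        calc ‖node Δx J‖ = ‖y + (node Δx J - y)‖ := by congr 1; abel
        _ ≤ ‖y‖ + ‖node Δx J - y‖ := norm_add_le _ _
      have h3 : (0:ℝ) ≤ ‖y‖ := norm_nonneg _
      have h4 : (0:ℝ) ≤ ‖node Δx J - y‖ := norm_nonneg _
      simp only [hg]
      have h5 : ‖node Δx J‖^2 ≤ (‖y‖ + ‖node Δx J - y‖)^2 := pow_le_pow_left₀ (norm_nonneg _) h2 2
      nlinarith [sq_nonneg (‖y‖ - ‖node Δx J - y‖), hR2, h5]
    calc ‖node Δx J‖ ^ 2 * (μ (cell Δx J)).toReal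
        = ∫ _ in cell Δx J, ‖node Δx J‖ ^ 2 ∂μ := by
          rw [setIntegral_const, smul_eq_mul, mul_comm]; rfl
      _ ≤ ∫ y in cell Δx J, g y ∂μ := by
          refine setIntegral_mono_on ?_ hgint.integrableOn (cells_measurable Δx J)
            hle
          exact integrableOn_const (measure_ne_top μ _)
  have hsumInt : Summable (fun J : Fin d → ℤ => ∫ y in cell Δx J, g y ∂μ) :=
    (hasSum_integral_iUnion (cells_measurable Δx) (cells_disjoint hΔx)
      hgint.integrableOn).summable
  exact Summable.of_nonneg_of_le (fun J => by positivity) hbound hsumInt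

end Init

lemma pos_nonneg' (r : ℝ) : 0 ≤ pos r := le_max_right _ _
lemma neg_nonneg' (r : ℝ) : 0 ≤ neg r := le_max_right _ _
lemma pos_le_abs (r : ℝ) : pos r ≤ |r| := max_le (le_abs_self r) (abs_nonneg r)
lemma negpart_le_abs (r : ℝ) : neg r ≤ |r| :=
  max_le ((le_abs_self (-r)).trans (by rw [abs_neg])) (abs_nonneg r)
lemma pos_add_neg (r : ℝ) : pos r + neg r = |r| := by
  rcases le_total 0 r with h | h
  · rw [pos, neg, max_eq_left h, max_eq_right (neg_nonpos.mpr h), abs_of_nonneg h]; ring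
  · rw [pos, neg, max_eq_right h, max_eq_left (neg_nonneg.mpr h), abs_of_nonpos h]; ring

lemma summable_shift {d : ℕ} {f : (Fin d → ℤ) → ℝ} (hf : Summable f) (v : Fin d → ℤ) :
    Summable fun J => f (J + v) := (Equiv.addRight v).summable_iff.mpr hf

lemma tsum_shift {d : ℕ} (f : (Fin d → ℤ) → ℝ) (v : Fin d → ℤ) :
    ∑' J, f (J + v) = ∑' J, f J := (Equiv.addRight v).tsum_eq f

lemma abs_tsum_le {ι : Type*} {f : ι → ℝ} (hf : Summable fun i => |f i|) :
    |∑' i, f i| ≤ ∑' i, |f i| := by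
  have h1 : Summable fun i => ‖f i‖ := by simp only [Real.norm_eq_abs]; exact hf
  have := norm_tsum_le_tsum_norm h1
  simp only [Real.norm_eq_abs] at this
  exact this

/-- The numerical flux. -/
def flux {d : ℕ} (a : (Fin d → ℤ) → Fin d → ℝ) (ρ : (Fin d → ℤ) → ℝ) (i : Fin d)
    (J : Fin d → ℤ) : ℝ :=
  pos (a J i) * ρ J - neg (a (J + Pi.single i 1) i) * ρ (J + Pi.single i 1)

lemma upwindStep_eq {d : ℕ} (Δx : Fin d → ℝ) (Δt : ℝ) (a : (Fin d → ℤ) → Fin d → ℝ)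
    (ρ : (Fin d → ℤ) → ℝ) (J : Fin d → ℤ) :
    upwindStep Δx Δt a ρ J = ρ J -
      ∑ i : Fin d, (Δt / Δx i) * (flux a ρ i J - flux a ρ i (J - Pi.single i 1)) := by
  unfold upwindStep flux
  congr 1
  refine Finset.sum_congr rfl fun i _ => ?_
  rw [sub_add_cancel]
  ring

/-- Duality / summation by parts for the upwind scheme. -/
lemma tsum_weighted {d : ℕ} (Δx : Fin d → ℝ) (Δt : ℝ) (a : (Fin d → ℤ) → Fin d → ℝ)
    (ρ : (Fin d → ℤ) → ℝ) (φ : (Fin d → ℤ) → ℝ)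
    (h0 : Summable fun J => φ J * ρ J)
    (h1 : ∀ i, Summable fun J => φ J * flux a ρ i J)
    (h2 : ∀ i, Summable fun J => φ (J + Pi.single i 1) * flux a ρ i J) :
    Summable (fun J => φ J * upwindStep Δx Δt a ρ J) ∧
    ∑' J, φ J * upwindStep Δx Δt a ρ J
      = (∑' J, φ J * ρ J) - ∑ i : Fin d, (Δt / Δx i) *
          ∑' J, (φ J - φ (J + Pi.single i 1)) * flux a ρ i J := by
  have h3 : ∀ i, Summable fun J => φ J * flux a ρ i (J - Pi.single i 1) := by
    intro i
    have := summable_shift (h2 i) (-(Pi.single i 1))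
    refine this.congr fun J => ?_
    rw [neg_add_cancel_right, ← sub_eq_add_neg]
  have hpt : ∀ J, φ J * upwindStep Δx Δt a ρ J = φ J * ρ J -
      ∑ i : Fin d, ((Δt / Δx i) * (φ J * flux a ρ i J)
        - (Δt / Δx i) * (φ J * flux a ρ i (J - Pi.single i 1))) := by
    intro J
    rw [upwindStep_eq, mul_sub, Finset.mul_sum]
    congr 1
    refine Finset.sum_congr rfl fun i _ => ?_
    ring
  have hin : ∀ i ∈ Finset.univ, Summable (fun J => (Δt / Δx i) * (φ J * flux a ρ i J)
      - (Δt / Δx i) * (φ J * flux a ρ i (J - Pi.single i 1))) :=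
    fun i _ => ((h1 i).mul_left _).sub ((h3 i).mul_left _)
  have hsumAll : Summable fun J => ∑ i : Fin d, ((Δt / Δx i) * (φ J * flux a ρ i J)
      - (Δt / Δx i) * (φ J * flux a ρ i (J - Pi.single i 1))) := summable_sum hin
  constructor
  · exact (h0.sub hsumAll).congr fun J => (hpt J).symm
  calc ∑' J, φ J * upwindStep Δx Δt a ρ J
      = ∑' J, (φ J * ρ J - ∑ i : Fin d, ((Δt / Δx i) * (φ J * flux a ρ i J)
          - (Δt / Δx i) * (φ J * flux a ρ i (J - Pi.single i 1)))) := tsum_congr hpt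
    _ = (∑' J, φ J * ρ J) - ∑' J, ∑ i : Fin d, ((Δt / Δx i) * (φ J * flux a ρ i J)
          - (Δt / Δx i) * (φ J * flux a ρ i (J - Pi.single i 1))) := Summable.tsum_sub h0 hsumAll
    _ = (∑' J, φ J * ρ J) - ∑ i : Fin d, ∑' J, ((Δt / Δx i) * (φ J * flux a ρ i J)
          - (Δt / Δx i) * (φ J * flux a ρ i (J - Pi.single i 1))) := by rw [Summable.tsum_finsetSum hin]
    _ = (∑' J, φ J * ρ J) - ∑ i : Fin d, (Δt / Δx i) *
          ∑' J, (φ J - φ (J + Pi.single i 1)) * flux a ρ i J := by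
        congr 1
        refine Finset.sum_congr rfl fun i _ => ?_
        have e1 : ∑' J, φ J * flux a ρ i (J - Pi.single i 1)
            = ∑' J, φ (J + Pi.single i 1) * flux a ρ i J := by
          have h := tsum_shift (fun J => φ J * flux a ρ i (J - Pi.single i 1)) (Pi.single i 1)
          exact h.symm.trans (tsum_congr fun J => by rw [add_sub_cancel_right])
        rw [Summable.tsum_sub ((h1 i).mul_left _) ((h3 i).mul_left _), tsum_mul_left, tsum_mul_left,
          ← mul_sub, e1]
        congr 1
        rw [← Summable.tsum_sub (h1 i) (h2 i)]
        exact tsum_congr fun J => by ring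

section Step
variable {d : ℕ} {Δx : Fin d → ℝ} (hΔx : ∀ i, 0 < Δx i) {Δt : ℝ} (hΔt : 0 < Δt)
  {winf : ℝ} (hwinf : 0 ≤ winf) (hCFL : winf * ∑ i, Δt / Δx i < 1 / 2)
  {a : (Fin d → ℤ) → Fin d → ℝ} (ha : ∀ J i, |a J i| ≤ winf)
  {ρ : (Fin d → ℤ) → ℝ} (hρ : ∀ J, 0 ≤ ρ J) (hsum : Summable ρ)
  (hmass : ∑' J, ρ J = 1)
  (hm2 : Summable fun J => ‖node Δx J‖ ^ 2 * ρ J)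

include hΔx hΔt hwinf hCFL ha hρ hsum hmass hm2

lemma step_main :
    (∀ J, 0 ≤ upwindStep Δx Δt a ρ J) ∧
    Summable (upwindStep Δx Δt a ρ) ∧
    (∑' J, upwindStep Δx Δt a ρ J = 1) ∧
    Summable (fun J => ‖node Δx J‖ ^ 2 * upwindStep Δx Δt a ρ J) ∧
    ∑' J, ‖node Δx J‖ ^ 2 * upwindStep Δx Δt a ρ J ≤
      (∑' J, ‖node Δx J‖ ^ 2 * ρ J) +
        Δt * (4 * winf * (d + ∑ i, Δx i)) * (1 + ∑' J, ‖node Δx J‖ ^ 2 * ρ J) := by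
  set φ : (Fin d → ℤ) → ℝ := fun J => ‖node Δx J‖ ^ 2 with hφ
  have hφ0 : ∀ J, 0 ≤ φ J := fun J => by positivity
  have hc : ∀ i, 0 < Δt / Δx i := fun i => div_pos hΔt (hΔx i)
  have hcΔ : ∀ i : Fin d, Δt / Δx i * Δx i = Δt := fun i => div_mul_cancel₀ Δt (ne_of_gt (hΔx i))
  -- norm relations between neighbors
  have hnn : ∀ (J : Fin d → ℤ) i, ‖node Δx J‖ ≤ ‖node Δx (J + Pi.single i 1)‖ + Δx i := by
    intro J i
    have h1 := abs_norm_sub_norm_le (node Δx J) (node Δx (J + Pi.single i 1))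
    rw [norm_sub_rev, norm_node_shift, abs_of_pos (hΔx i)] at h1
    rw [abs_le] at h1
    linarith [h1.1, h1.2]
  have hnn' : ∀ (J : Fin d → ℤ) i, ‖node Δx (J + Pi.single i 1)‖ ≤ ‖node Δx J‖ + Δx i := by
    intro J i
    have h1 := abs_norm_sub_norm_le (node Δx (J + Pi.single i 1)) (node Δx J)
    rw [norm_node_shift, abs_of_pos (hΔx i)] at h1
    rw [abs_le] at h1
    linarith [h1.1, h1.2]
  have hφshift : ∀ (J : Fin d → ℤ) i, φ J ≤ 2 * φ (J + Pi.single i 1) + 2 * (Δx i) ^ 2 := by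
    intro J i
    have := hnn J i
    have h2 : (0:ℝ) ≤ ‖node Δx (J + Pi.single i 1)‖ := norm_nonneg _
    have h3 : (0:ℝ) ≤ ‖node Δx J‖ := norm_nonneg _
    simp only [hφ]
    nlinarith [pow_le_pow_left₀ h3 this 2, sq_nonneg (‖node Δx (J + Pi.single i 1)‖ - Δx i)]
  have hφshift' : ∀ (J : Fin d → ℤ) i, φ (J + Pi.single i 1) ≤ 2 * φ J + 2 * (Δx i) ^ 2 := by
    intro J i
    have := hnn' J i
    have h2 : (0:ℝ) ≤ ‖node Δx (J + Pi.single i 1)‖ := norm_nonneg _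
    have h3 : (0:ℝ) ≤ ‖node Δx J‖ := norm_nonneg _
    simp only [hφ]
    nlinarith [pow_le_pow_left₀ h2 this 2, sq_nonneg (‖node Δx J‖ - Δx i)]
  -- CFL consequence
  have hCFLi : ∀ J : Fin d → ℤ, ∑ i : Fin d, (Δt / Δx i) * (pos (a J i) + neg (a J i)) ≤ 1/2 := by
    intro J
    calc ∑ i : Fin d, (Δt / Δx i) * (pos (a J i) + neg (a J i))
        ≤ ∑ i : Fin d, (Δt / Δx i) * winf := by
          refine Finset.sum_le_sum fun i _ => ?_
          refine mul_le_mul_of_nonneg_left ?_ (hc i).le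
          rw [pos_add_neg]
          exact ha J i
      _ = winf * ∑ i, Δt / Δx i := by rw [Finset.mul_sum]; exact Finset.sum_congr rfl fun i _ => mul_comm _ _
      _ ≤ 1/2 := hCFL.le
  -- splitting of the step
  have hsplit : ∀ J, upwindStep Δx Δt a ρ J =
      ρ J * (1 - ∑ i : Fin d, (Δt / Δx i) * (pos (a J i) + neg (a J i)))
      + ∑ i : Fin d, (Δt / Δx i) * (neg (a (J + Pi.single i 1) i) * ρ (J + Pi.single i 1)
          + pos (a (J - Pi.single i 1) i) * ρ (J - Pi.single i 1)) := by
    intro J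
    unfold upwindStep
    rw [Finset.sum_congr rfl (fun i (_ : i ∈ Finset.univ) =>
      show (Δt / Δx i) * (pos (a J i) * ρ J
          - neg (a (J + Pi.single i 1) i) * ρ (J + Pi.single i 1)
          - pos (a (J - Pi.single i 1) i) * ρ (J - Pi.single i 1) + neg (a J i) * ρ J)
        = ρ J * ((Δt / Δx i) * (pos (a J i) + neg (a J i)))
          - (Δt / Δx i) * (neg (a (J + Pi.single i 1) i) * ρ (J + Pi.single i 1)
            + pos (a (J - Pi.single i 1) i) * ρ (J - Pi.single i 1)) from by ring),
      Finset.sum_sub_distrib, ← Finset.mul_sum]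
    ring
  -- nonnegativity
  have hpos : ∀ J, 0 ≤ upwindStep Δx Δt a ρ J := by
    intro J
    rw [hsplit J]
    have hB : 0 ≤ ∑ i : Fin d, (Δt / Δx i) * (neg (a (J + Pi.single i 1) i) * ρ (J + Pi.single i 1)
        + pos (a (J - Pi.single i 1) i) * ρ (J - Pi.single i 1)) := by
      refine Finset.sum_nonneg fun i _ => ?_
      exact mul_nonneg (hc i).le (add_nonneg (mul_nonneg (neg_nonneg' _) (hρ _))
        (mul_nonneg (pos_nonneg' _) (hρ _)))
    have hA := hCFLi J
    have := hρ J
    nlinarith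
  -- pointwise domination of the step
  have hdom : ∀ J, upwindStep Δx Δt a ρ J ≤ ρ J + ∑ i : Fin d,
      (Δt / Δx i) * (winf * ρ (J + Pi.single i 1) + winf * ρ (J - Pi.single i 1)) := by
    intro J
    rw [hsplit J]
    have h1 : ρ J * (1 - ∑ i : Fin d, (Δt / Δx i) * (pos (a J i) + neg (a J i))) ≤ ρ J := by
      have h2 : 0 ≤ ∑ i : Fin d, (Δt / Δx i) * (pos (a J i) + neg (a J i)) :=
        Finset.sum_nonneg fun i _ => mul_nonneg (hc i).le
          (add_nonneg (pos_nonneg' _) (neg_nonneg' _))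
      nlinarith [hρ J]
    refine add_le_add h1 (Finset.sum_le_sum fun i _ => ?_)
    refine mul_le_mul_of_nonneg_left ?_ (hc i).le
    refine add_le_add ?_ ?_
    · exact mul_le_mul_of_nonneg_right ((negpart_le_abs _).trans (ha _ i)) (hρ _)
    · exact mul_le_mul_of_nonneg_right ((pos_le_abs _).trans (ha _ i)) (hρ _)
  -- summability of the step
  have hsum' : Summable (upwindStep Δx Δt a ρ) := by
    refine Summable.of_nonneg_of_le hpos hdom ?_
    refine hsum.add (summable_sum fun i _ => ?_)
    exact (((summable_shift hsum (Pi.single i 1)).mul_left winf).add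
      ((summable_shift hsum (-(Pi.single i 1))).congr (fun J => by
        rw [← sub_eq_add_neg]) |>.mul_left winf)).mul_left _
  -- flux bound
  have hFabs : ∀ i J, |flux a ρ i J| ≤ winf * (ρ J + ρ (J + Pi.single i 1)) := by
    intro i J
    refine (abs_sub (pos (a J i) * ρ J) _).trans ?_
    rw [mul_add]
    refine add_le_add ?_ ?_
    · rw [abs_mul, abs_of_nonneg (hρ J), abs_of_nonneg (pos_nonneg' _)]
      exact mul_le_mul_of_nonneg_right ((pos_le_abs _).trans (ha J i)) (hρ J)
    · rw [abs_mul, abs_of_nonneg (hρ _), abs_of_nonneg (neg_nonneg' _)]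
      exact mul_le_mul_of_nonneg_right ((negpart_le_abs _).trans (ha _ i)) (hρ _)
  have hFnn : ∀ i J, 0 ≤ winf * (ρ J + ρ (J + Pi.single i 1)) :=
    fun i J => mul_nonneg hwinf (add_nonneg (hρ _) (hρ _))
  -- summability for mass conservation (φ = 1)
  have hFsum : ∀ i, Summable (flux a ρ i) := by
    intro i
    refine Summable.of_abs (Summable.of_nonneg_of_le (fun J => abs_nonneg _) (fun J => hFabs i J) ?_)
    exact (hsum.add (summable_shift hsum (Pi.single i 1))).mul_left winf
  have hmass' : ∑' J, upwindStep Δx Δt a ρ J = 1 := by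
    have := tsum_weighted Δx Δt a ρ (fun _ => 1)
      (by simpa using hsum) (fun i => by simpa using hFsum i) (fun i => by simpa using hFsum i)
    have h2 := this.2
    simp only [one_mul, sub_self, zero_mul, tsum_zero, mul_zero, Finset.sum_const_zero,
      sub_zero] at h2
    rw [h2, hmass]
  -- moment summabilities
  have hS1 : Summable fun J => ‖node Δx J‖ * ρ J := by
    refine Summable.of_nonneg_of_le (fun J => mul_nonneg (norm_nonneg _) (hρ J))
      (fun J => ?_) (hsum.add hm2)
    have h1 : ‖node Δx J‖ ≤ 1 + ‖node Δx J‖ ^ 2 := by nlinarith [sq_nonneg (‖node Δx J‖ - 1), norm_nonneg (node Δx J)]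
    calc ‖node Δx J‖ * ρ J ≤ (1 + ‖node Δx J‖ ^ 2) * ρ J :=
          mul_le_mul_of_nonneg_right h1 (hρ J)
      _ = ρ J + ‖node Δx J‖ ^ 2 * ρ J := by ring
  have hm2shift : ∀ i, Summable fun J => φ J * ρ (J + Pi.single i 1) := by
    intro i
    have base : Summable fun J => (2 * φ J + 2 * (Δx i) ^ 2) * ρ J := by
      refine ((hm2.mul_left 2).add (hsum.mul_left (2 * (Δx i) ^ 2))).congr fun J => ?_
      simp only [hφ]; ring
    have hmaj := summable_shift base (Pi.single i 1)
    exact Summable.of_nonneg_of_le (fun J => mul_nonneg (hφ0 J) (hρ _))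
      (fun J => mul_le_mul_of_nonneg_right (hφshift J i) (hρ _)) hmaj
  have hφF : ∀ i, Summable fun J => φ J * flux a ρ i J := by
    intro i
    refine Summable.of_abs (Summable.of_nonneg_of_le (fun J => abs_nonneg _) (fun J => ?_)
      (((hm2.add (hm2shift i)).mul_left winf)))
    rw [abs_mul, abs_of_nonneg (hφ0 J)]
    calc φ J * |flux a ρ i J| ≤ φ J * (winf * (ρ J + ρ (J + Pi.single i 1))) :=
          mul_le_mul_of_nonneg_left (hFabs i J) (hφ0 J)
      _ = winf * (φ J * ρ J + φ J * ρ (J + Pi.single i 1)) := by ring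
  have hφF' : ∀ i, Summable fun J => φ (J + Pi.single i 1) * flux a ρ i J := by
    intro i
    have hS : Summable fun J => φ (J + Pi.single i 1) * ρ (J + Pi.single i 1) :=
      (summable_shift hm2 (Pi.single i 1)).congr fun J => rfl
    have hS2 : Summable fun J => φ (J + Pi.single i 1) * ρ J := by
      refine Summable.of_nonneg_of_le (fun J => mul_nonneg (hφ0 _) (hρ _)) (fun J => ?_)
        ((hm2.mul_left 2).add (hsum.mul_left (2 * (Δx i) ^ 2)))
      calc φ (J + Pi.single i 1) * ρ J ≤ (2 * φ J + 2 * (Δx i) ^ 2) * ρ J :=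
            mul_le_mul_of_nonneg_right (hφshift' J i) (hρ J)
        _ = 2 * (φ J * ρ J) + 2 * (Δx i) ^ 2 * ρ J := by ring
    refine Summable.of_abs (Summable.of_nonneg_of_le (fun J => abs_nonneg _) (fun J => ?_)
      ((hS2.add hS).mul_left winf))
    rw [abs_mul, abs_of_nonneg (hφ0 _)]
    calc φ (J + Pi.single i 1) * |flux a ρ i J|
        ≤ φ (J + Pi.single i 1) * (winf * (ρ J + ρ (J + Pi.single i 1))) :=
          mul_le_mul_of_nonneg_left (hFabs i J) (hφ0 _)
      _ = winf * (φ (J + Pi.single i 1) * ρ J + φ (J + Pi.single i 1) * ρ (J + Pi.single i 1)) := by ring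
  obtain ⟨hmom_sum, hmom_eq⟩ := tsum_weighted Δx Δt a ρ φ hm2 hφF hφF'
  refine ⟨hpos, hsum', hmass', hmom_sum, ?_⟩
  -- now the quantitative bound
  set M : ℝ := ∑' J, φ J * ρ J with hM
  have hMnn : 0 ≤ M := tsum_nonneg fun J => mul_nonneg (hφ0 J) (hρ J)
  set S1 : ℝ := ∑' J, ‖node Δx J‖ * ρ J with hS1def
  have hS1nn : 0 ≤ S1 := tsum_nonneg fun J => mul_nonneg (norm_nonneg _) (hρ J)
  have hS1le : S1 ≤ 1 + M := by
    rw [hS1def, hM]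
    have h2 : Summable fun J => ρ J + φ J * ρ J := hsum.add hm2
    calc ∑' J, ‖node Δx J‖ * ρ J ≤ ∑' J, (ρ J + φ J * ρ J) := by
          refine Summable.tsum_le_tsum (fun J => ?_) hS1 h2
          have h1 : ‖node Δx J‖ ≤ 1 + φ J := by
            simp only [hφ]
            nlinarith [sq_nonneg (‖node Δx J‖ - 1), norm_nonneg (node Δx J)]
          calc ‖node Δx J‖ * ρ J ≤ (1 + φ J) * ρ J := mul_le_mul_of_nonneg_right h1 (hρ J)
            _ = ρ J + φ J * ρ J := by ring
      _ = 1 + M := by rw [Summable.tsum_add hsum hm2, hmass, hM]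
  -- per-direction tail bound
  have hT : ∀ i : Fin d, |∑' J, (φ J - φ (J + Pi.single i 1)) * flux a ρ i J|
      ≤ Δx i * winf * (4 * S1 + 4 * Δx i) := by
    intro i
    have hφd : ∀ J, |φ J - φ (J + Pi.single i 1)| ≤ Δx i * (2 * ‖node Δx J‖ + Δx i) := by
      intro J
      have h := sq_norm_diff (node Δx J) (node Δx (J + Pi.single i 1))
        (by rw [norm_sub_rev, norm_node_shift, abs_of_pos (hΔx i)])
      exact h
    -- the comparison function
    set u : (Fin d → ℤ) → ℝ := fun J => 2 * (‖node Δx J‖ * ρ J) + Δx i * ρ J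
      + 2 * (‖node Δx J‖ * ρ (J + Pi.single i 1)) + Δx i * ρ (J + Pi.single i 1) with hu
    have hunn : ∀ J, 0 ≤ u J := by
      intro J
      have := hρ J; have := hρ (J + Pi.single i 1)
      have := norm_nonneg (node Δx J); have := hΔx i
      simp only [hu]; positivity
    have hS1shift : Summable fun J => ‖node Δx J‖ * ρ (J + Pi.single i 1) := by
      refine Summable.of_nonneg_of_le (fun J => mul_nonneg (norm_nonneg _) (hρ _)) (fun J => ?_)
        (summable_shift (hS1.add (hsum.mul_left (Δx i))) (Pi.single i 1))
      nlinarith [hnn J i, hρ (J + Pi.single i 1)]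
    have husum : Summable u :=
      (((hS1.mul_left 2).add (hsum.mul_left (Δx i))).add (hS1shift.mul_left 2)).add
        ((summable_shift hsum (Pi.single i 1)).mul_left (Δx i))
    have habs : ∀ J, |(φ J - φ (J + Pi.single i 1)) * flux a ρ i J| ≤ Δx i * winf * u J := by
      intro J
      rw [abs_mul]
      calc |φ J - φ (J + Pi.single i 1)| * |flux a ρ i J|
          ≤ (Δx i * (2 * ‖node Δx J‖ + Δx i)) * (winf * (ρ J + ρ (J + Pi.single i 1))) := by
            refine mul_le_mul (hφd J) (hFabs i J) (abs_nonneg _) ?_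
            have := norm_nonneg (node Δx J); have := hΔx i
            positivity
        _ = Δx i * winf * (2 * ‖node Δx J‖ * ρ J + Δx i * ρ J
            + 2 * ‖node Δx J‖ * ρ (J + Pi.single i 1) + Δx i * ρ (J + Pi.single i 1)) := by ring
        _ = Δx i * winf * u J := by simp only [hu]; ring_nf
    have habs_sum : Summable fun J => |(φ J - φ (J + Pi.single i 1)) * flux a ρ i J| :=
      Summable.of_nonneg_of_le (fun J => abs_nonneg _) habs (husum.mul_left _)
    have h1 := abs_tsum_le habs_sum
    have h2 : ∑' J, |(φ J - φ (J + Pi.single i 1)) * flux a ρ i J| ≤ ∑' J, Δx i * winf * u J :=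
      Summable.tsum_le_tsum habs habs_sum (husum.mul_left _)
    have h3 : ∑' J, Δx i * winf * u J = Δx i * winf * ∑' J, u J := tsum_mul_left
    -- evaluate/estimate ∑' u
    have hu4 : ∑' J, u J ≤ 4 * S1 + 4 * Δx i := by
      have e1 : Summable fun J => 2 * (‖node Δx J‖ * ρ J) + Δx i * ρ J :=
        (hS1.mul_left 2).add (hsum.mul_left (Δx i))
      have e2 : Summable fun J => 2 * (‖node Δx J‖ * ρ (J + Pi.single i 1))
          + Δx i * ρ (J + Pi.single i 1) :=
        (hS1shift.mul_left 2).add ((summable_shift hsum (Pi.single i 1)).mul_left (Δx i))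
      have split : ∑' J, u J = (∑' J, (2 * (‖node Δx J‖ * ρ J) + Δx i * ρ J))
          + ∑' J, (2 * (‖node Δx J‖ * ρ (J + Pi.single i 1)) + Δx i * ρ (J + Pi.single i 1)) := by
        rw [← Summable.tsum_add e1 e2]
        exact tsum_congr fun J => by simp only [hu]; ring
      have part1 : ∑' J, (2 * (‖node Δx J‖ * ρ J) + Δx i * ρ J) = 2 * S1 + Δx i := by
        rw [Summable.tsum_add (hS1.mul_left 2) (hsum.mul_left (Δx i)), tsum_mul_left, tsum_mul_left,
          hmass, hS1def, mul_one]
      have part2 : ∑' J, (2 * (‖node Δx J‖ * ρ (J + Pi.single i 1))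
          + Δx i * ρ (J + Pi.single i 1)) ≤ 2 * (S1 + Δx i) + Δx i := by
        rw [Summable.tsum_add (hS1shift.mul_left 2) ((summable_shift hsum (Pi.single i 1)).mul_left (Δx i)),
          tsum_mul_left, tsum_mul_left]
        have hshiftmass : ∑' J : Fin d → ℤ, ρ (J + Pi.single i 1) = 1 := by
          rw [tsum_shift ρ (Pi.single i 1), hmass]
        rw [hshiftmass, mul_one]
        have hS1s : ∑' J, ‖node Δx J‖ * ρ (J + Pi.single i 1) ≤ S1 + Δx i := by
          have hw : Summable fun J => ‖node Δx J‖ * ρ J + Δx i * ρ J :=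
            hS1.add (hsum.mul_left (Δx i))
          have hb : Summable fun J => ‖node Δx (J + Pi.single i 1)‖ * ρ (J + Pi.single i 1)
              + Δx i * ρ (J + Pi.single i 1) := summable_shift hw (Pi.single i 1)
          calc ∑' J, ‖node Δx J‖ * ρ (J + Pi.single i 1)
              ≤ ∑' J, (‖node Δx (J + Pi.single i 1)‖ * ρ (J + Pi.single i 1)
                + Δx i * ρ (J + Pi.single i 1)) := by
                refine Summable.tsum_le_tsum (fun J => ?_) hS1shift hb
                nlinarith [hnn J i, hρ (J + Pi.single i 1)]
            _ = ∑' J, (‖node Δx J‖ * ρ J + Δx i * ρ J) :=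
                tsum_shift (fun J => ‖node Δx J‖ * ρ J + Δx i * ρ J) (Pi.single i 1)
            _ = S1 + Δx i := by
                rw [Summable.tsum_add hS1 (hsum.mul_left (Δx i)), tsum_mul_left, hmass, mul_one, hS1def]
        nlinarith [hΔx i]
      linarith [split, part1, part2]
    calc |∑' J, (φ J - φ (J + Pi.single i 1)) * flux a ρ i J|
        ≤ ∑' J, |(φ J - φ (J + Pi.single i 1)) * flux a ρ i J| := h1
      _ ≤ Δx i * winf * ∑' J, u J := by rw [← h3]; exact h2
      _ ≤ Δx i * winf * (4 * S1 + 4 * Δx i) := by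
          refine mul_le_mul_of_nonneg_left hu4 ?_
          exact mul_nonneg (hΔx i).le hwinf
  -- final assembly
  show ∑' J, φ J * upwindStep Δx Δt a ρ J ≤ (∑' J, φ J * ρ J)
    + Δt * (4 * winf * ((d : ℝ) + ∑ i, Δx i)) * (1 + ∑' J, φ J * ρ J)
  rw [hmom_eq, ← hM]
  have hfinal : -(∑ i : Fin d, (Δt / Δx i) * ∑' J, (φ J - φ (J + Pi.single i 1)) * flux a ρ i J)
      ≤ Δt * (4 * winf * (d + ∑ i, Δx i)) * (1 + M) := by
    calc -(∑ i : Fin d, (Δt / Δx i) * ∑' J, (φ J - φ (J + Pi.single i 1)) * flux a ρ i J)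
        = ∑ i : Fin d, -((Δt / Δx i) * ∑' J, (φ J - φ (J + Pi.single i 1)) * flux a ρ i J) := by
          rw [← Finset.sum_neg_distrib]
      _ ≤ ∑ i : Fin d, Δt * winf * (4 * S1 + 4 * Δx i) := by
          refine Finset.sum_le_sum fun i _ => ?_
          have h1 := hT i
          have h2 : -((Δt / Δx i) * ∑' J, (φ J - φ (J + Pi.single i 1)) * flux a ρ i J)
              ≤ (Δt / Δx i) * |∑' J, (φ J - φ (J + Pi.single i 1)) * flux a ρ i J| := by
            rw [← mul_neg]
            refine mul_le_mul_of_nonneg_left (neg_le_abs _) (hc i).le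
          refine h2.trans ?_
          calc (Δt / Δx i) * |∑' J, (φ J - φ (J + Pi.single i 1)) * flux a ρ i J|
              ≤ (Δt / Δx i) * (Δx i * winf * (4 * S1 + 4 * Δx i)) :=
                mul_le_mul_of_nonneg_left h1 (hc i).le
            _ = Δt * winf * (4 * S1 + 4 * Δx i) := by
                have hrw : Δt / Δx i * (Δx i * winf * (4 * S1 + 4 * Δx i))
                    = (Δt / Δx i * Δx i) * (winf * (4 * S1 + 4 * Δx i)) := by ring
                rw [hrw, hcΔ i]
                ring
      _ = Δt * winf * (4 * d * S1) + Δt * winf * (4 * ∑ i, Δx i) := by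
          rw [Finset.sum_congr rfl (fun i (_ : i ∈ Finset.univ) =>
            show Δt * winf * (4 * S1 + 4 * Δx i)
              = Δt * winf * (4 * S1) + Δt * winf * 4 * Δx i from by ring),
            Finset.sum_add_distrib, Finset.sum_const, Finset.card_univ, Fintype.card_fin,
            nsmul_eq_mul, ← Finset.mul_sum]
          ring
      _ ≤ Δt * (4 * winf * (d + ∑ i, Δx i)) * (1 + M) := by
          have hSx : 0 ≤ ∑ i, Δx i := Finset.sum_nonneg fun i _ => (hΔx i).le
          have hd0 : (0:ℝ) ≤ d := Nat.cast_nonneg d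
          nlinarith [mul_nonneg (mul_nonneg (mul_nonneg hΔt.le hwinf) hd0)
              (show (0:ℝ) ≤ 1 + M - S1 by linarith),
            mul_nonneg (mul_nonneg (mul_nonneg hΔt.le hwinf) hSx) hMnn]
  linarith [hfinal]

end Step


lemma discVel_bound {d : ℕ} (W : Euc d → ℝ) {winf : ℝ} (hwinf : 0 ≤ winf)
    (hbound : ∀ x : Euc d, x ≠ 0 → ‖gradient W x‖ ≤ winf) (Δx : Fin d → ℝ)
    (ρ : (Fin d → ℤ) → ℝ) (hρ : ∀ J, 0 ≤ ρ J) (hsum : Summable ρ)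
    (hmass : ∑' J, ρ J = 1) :
    ∀ J i, |discVel W Δx ρ J i| ≤ winf := by
  have hg : ∀ x : Euc d, ‖hatGrad W x‖ ≤ winf := by
    intro x
    unfold hatGrad
    split_ifs with h
    · simpa using hwinf
    · exact hbound x h
  intro J i
  unfold discVel
  rw [abs_neg]
  have hterm : ∀ K : Fin d → ℤ, |ρ K * hatGrad W (node Δx J - node Δx K) i| ≤ winf * ρ K := by
    intro K
    rw [abs_mul, abs_of_nonneg (hρ K)]
    calc ρ K * |hatGrad W (node Δx J - node Δx K) i|
        ≤ ρ K * winf := mul_le_mul_of_nonneg_left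
          ((coord_le_norm _ i).trans (hg _)) (hρ K)
      _ = winf * ρ K := mul_comm _ _
  have hs : Summable fun K : Fin d → ℤ => |ρ K * hatGrad W (node Δx J - node Δx K) i| :=
    Summable.of_nonneg_of_le (fun _ => abs_nonneg _) hterm (hsum.mul_left winf)
  calc |∑' K : Fin d → ℤ, ρ K * hatGrad W (node Δx J - node Δx K) i|
      ≤ ∑' K : Fin d → ℤ, |ρ K * hatGrad W (node Δx J - node Δx K) i| := abs_tsum_le hs
    _ ≤ ∑' K : Fin d → ℤ, winf * ρ K := Summable.tsum_le_tsum hterm hs (hsum.mul_left winf)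
    _ = winf := by rw [tsum_mul_left, hmass, mul_one]


/-- Bound on the discrete second moment of the upwind scheme. -/
theorem stmt7 {d : ℕ} (hd : 1 ≤ d) (W : Euc d → ℝ) (lam winf : ℝ) (hwinf : 0 ≤ winf)
    (hsymm : ∀ x : Euc d, W (-x) = W x) (hW0 : W 0 = 0)
    (hconv : ConvexOn ℝ Set.univ (fun x : Euc d => W x - lam / 2 * ‖x‖ ^ 2))
    (hC1 : ContDiffOn ℝ 1 W {(0 : Euc d)}ᶜ)
    (hbound : ∀ x : Euc d, x ≠ 0 → ‖gradient W x‖ ≤ winf)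
    (Δx : Fin d → ℝ) (hΔx : ∀ i, 0 < Δx i) (Δt : ℝ) (hΔt : 0 < Δt)
    (hCFL : winf * ∑ i, Δt / Δx i < 1 / 2)
    (ρini : Measure (Euc d)) [IsProbabilityMeasure ρini]
    (hmom2 : Integrable (fun x : Euc d => ‖x‖ ^ 2) ρini)
    (ρ : ℕ → (Fin d → ℤ) → ℝ)
    (h0 : ∀ J, ρ 0 J = (ρini (cell Δx J)).toReal)
    (hrec : ∀ n, ρ (n + 1) = upwindStep Δx Δt (discVel W Δx (ρ n)) (ρ n)) :
    ∃ C : ℝ, 0 ≤ C ∧ ∀ n : ℕ,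
      Summable (fun J : Fin d → ℤ => ‖node Δx J‖ ^ 2 * ρ n J) ∧
      ∑' J : Fin d → ℤ, ‖node Δx J‖ ^ 2 * ρ n J ≤
        Real.exp (C * (n * Δt)) * ((∑' J : Fin d → ℤ, ‖node Δx J‖ ^ 2 * ρ 0 J) + C) := by
  classical
  set K : ℝ := 4 * winf * ((d : ℝ) + ∑ i, Δx i) with hK
  have hSx : (0:ℝ) ≤ ∑ i, Δx i := Finset.sum_nonneg fun i _ => (hΔx i).le
  have hK0 : 0 ≤ K := by
    refine mul_nonneg (by linarith) (by positivity)
  refine ⟨K + 1, by linarith, ?_⟩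
  have hρ0 : ρ 0 = fun J => (ρini (cell Δx J)).toReal := funext h0
  have hinv : ∀ n : ℕ, (∀ J, 0 ≤ ρ n J) ∧ Summable (ρ n) ∧ (∑' J, ρ n J = 1) ∧
      Summable (fun J => ‖node Δx J‖ ^ 2 * ρ n J) := by
    intro n
    induction n with
    | zero =>
      refine ⟨fun J => by rw [h0]; exact ENNReal.toReal_nonneg, ?_, ?_, ?_⟩
      · rw [hρ0]; exact init_mass_summable hΔx ρini
      · rw [hρ0]; exact init_mass hΔx ρini
      · rw [hρ0]; exact init_mom_summable hΔx ρini hmom2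
    | succ n ih =>
      obtain ⟨ha1, ha2, ha3, ha4⟩ := ih
      have hvel : ∀ J i, |discVel W Δx (ρ n) J i| ≤ winf :=
        discVel_bound W hwinf hbound Δx (ρ n) ha1 ha2 ha3
      have hstep := step_main hΔx hΔt hwinf hCFL hvel ha1 ha2 ha3 ha4
      rw [hrec n]
      exact ⟨hstep.1, hstep.2.1, hstep.2.2.1, hstep.2.2.2.1⟩
  set M : ℕ → ℝ := fun n => ∑' J, ‖node Δx J‖ ^ 2 * ρ n J with hM
  have hMnn : ∀ n, 0 ≤ M n :=
    fun n => tsum_nonneg fun J => mul_nonneg (by positivity) ((hinv n).1 J)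
  have hrecM : ∀ n : ℕ, M (n + 1) ≤ M n + Δt * K * (1 + M n) := by
    intro n
    obtain ⟨ha1, ha2, ha3, ha4⟩ := hinv n
    have hvel : ∀ J i, |discVel W Δx (ρ n) J i| ≤ winf :=
      discVel_bound W hwinf hbound Δx (ρ n) ha1 ha2 ha3
    have hstep := step_main hΔx hΔt hwinf hCFL hvel ha1 ha2 ha3 ha4
    have hb := hstep.2.2.2.2
    have hMn1 : M (n + 1) = ∑' J, ‖node Δx J‖ ^ 2 * upwindStep Δx Δt (discVel W Δx (ρ n)) (ρ n) J := by
      simp only [hM]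
      rw [hrec n]
    rw [hMn1]
    simpa [hK] using hb
  have hexp : ∀ n : ℕ, M n + 1 ≤ Real.exp (K * (n * Δt)) * (M 0 + 1) := by
    intro n
    induction n with
    | zero => simp
    | succ n ih =>
      have h1 := hrecM n
      have h2 : M (n + 1) + 1 ≤ (1 + Δt * K) * (M n + 1) := by nlinarith
      have h3 : (1 + Δt * K) ≤ Real.exp (Δt * K) := by
        linarith [Real.add_one_le_exp (Δt * K)]
      calc M (n + 1) + 1 ≤ (1 + Δt * K) * (M n + 1) := h2
        _ ≤ Real.exp (Δt * K) * (M n + 1) :=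
            mul_le_mul_of_nonneg_right h3 (by linarith [hMnn n])
        _ ≤ Real.exp (Δt * K) * (Real.exp (K * (n * Δt)) * (M 0 + 1)) :=
            mul_le_mul_of_nonneg_left ih (Real.exp_nonneg _)
        _ = Real.exp (K * ((n + 1 : ℕ) * Δt)) * (M 0 + 1) := by
            rw [← mul_assoc, ← Real.exp_add]
            congr 2
            push_cast
            ring
  intro n
  refine ⟨(hinv n).2.2.2, ?_⟩
  show M n ≤ Real.exp ((K + 1) * (n * Δt)) * (M 0 + (K + 1))
  have h1 := hexp n
  have hnt : 0 ≤ (n : ℝ) * Δt := mul_nonneg (Nat.cast_nonneg n) hΔt.le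
  have h2 : Real.exp (K * (n * Δt)) ≤ Real.exp ((K + 1) * (n * Δt)) := by
    apply Real.exp_le_exp.mpr
    nlinarith
  have h3 : M 0 + 1 ≤ M 0 + (K + 1) := by linarith
  have h4 : Real.exp (K * (n * Δt)) * (M 0 + 1) ≤ Real.exp ((K + 1) * (n * Δt)) * (M 0 + (K + 1)) :=
    mul_le_mul h2 h3 (by linarith [hMnn 0]) (Real.exp_nonneg _)
  linarith
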